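/- Let σ be a doubling measure on ℝⁿ. Then for every cube Q and every 0 < δ < 1, the σ-measure of the inner halo satisfies |Q ∖ (1−δ)Q|_σ ≤ (C / ln(1/δ)) |Q|_σ, where C depends only on n and the doubling constant of σ. -/

import Mathlib

open MeasureTheory ENNReal
open Metric

noncomputable section

/-- The axis-parallel cube in `ℝⁿ` with center `c` and side length `l`. -/
def Cube (n : ℕ) (c : Fin n → ℝ) (l : ℝ) : Set (Fin n → ℝ) :=
  {x | ∀ i, |x i - c i| ≤ l / 2}

/-- A measure is doubling with constant `C` if `μ(2Q) ≤ C μ(Q)` for all cubes `Q`. -/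
def IsDoubling {n : ℕ} (μ : Measure (Fin n → ℝ)) (C : ℝ) : Prop :=
  ∀ (c : Fin n → ℝ) (l : ℝ), 0 < l →
    μ (Cube n c (2 * l)) ≤ ENNReal.ofReal C * μ (Cube n c l)

lemma doubling_four {n : ℕ} {σ : Measure (Fin n → ℝ)} {D : ℝ}
    (hD : ∀ (c : Fin n → ℝ) (r : ℝ), 0 < r →
      σ (closedBall c r) ≤ ENNReal.ofReal D * σ (closedBall c (r / 2)))
    (p : Fin n → ℝ) {s : ℝ} (hs : 0 < s) :
    σ (closedBall p (2 * s)) ≤ ENNReal.ofReal D ^ 4 * σ (closedBall p (s / 8)) := by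
  have h1 := hD p (2 * s) (by linarith)
  have h2 := hD p s hs
  have h3 := hD p (s / 2) (by linarith)
  have h4 := hD p (s / 4) (by linarith)
  rw [show (2 * s) / 2 = s by ring] at h1
  rw [show (s / 2) / 2 = s / 4 by ring] at h3
  rw [show (s / 4) / 2 = s / 8 by ring] at h4
  calc σ (closedBall p (2 * s)) ≤ ENNReal.ofReal D * σ (closedBall p s) := h1
    _ ≤ ENNReal.ofReal D * (ENNReal.ofReal D * σ (closedBall p (s / 2))) :=
        mul_le_mul_right h2 _
    _ ≤ ENNReal.ofReal D * (ENNReal.ofReal D * (ENNReal.ofReal D * σ (closedBall p (s / 4)))) :=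
        mul_le_mul_right (mul_le_mul_right h3 _) _
    _ ≤ ENNReal.ofReal D * (ENNReal.ofReal D * (ENNReal.ofReal D *
          (ENNReal.ofReal D * σ (closedBall p (s / 8))))) :=
        mul_le_mul_right (mul_le_mul_right (mul_le_mul_right h4 _) _) _
    _ = ENNReal.ofReal D ^ 4 * σ (closedBall p (s / 8)) := by ring

lemma psi_estimates {n : ℕ} (c : Fin n → ℝ) {l δ w : ℝ}
    (hl : 0 < l) (hδ : 0 < δ) (hδ1 : δ < 1) (hw1 : 2 * δ ≤ w) (hw2 : w ≤ 1 / 4)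
    {x : Fin n → ℝ} (hx1 : dist x c ≤ l / 2) (hx2 : (1 - δ) * l / 2 < dist x c) :
    dist (c + (((1 - 3 * w / 2) * (l / 2)) / dist x c) • (x - c)) c = (1 - 3 * w / 2) * (l / 2) ∧
    dist x (c + (((1 - 3 * w / 2) * (l / 2)) / dist x c) • (x - c)) = dist x c - (1 - 3 * w / 2) * (l / 2) := by
  set R := (1 - 3 * w / 2) * (l / 2) with hR
  have hw0 : 0 < w := by linarith
  have hd0 : 0 < dist x c := lt_trans (by nlinarith : (0:ℝ) < (1 - δ) * l / 2) hx2
  have hR0 : 0 < R := by rw [hR]; nlinarith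
  have hRd : R ≤ dist x c := by nlinarith
  set t := R / dist x c with ht
  have ht0 : 0 ≤ t := by positivity
  have ht1 : t ≤ 1 := by rw [ht, div_le_one hd0]; exact hRd
  have hnorm : ‖x - c‖ = dist x c := (dist_eq_norm x c).symm
  constructor
  · rw [dist_eq_norm, add_sub_cancel_left, norm_smul, Real.norm_eq_abs,
      abs_of_nonneg ht0, hnorm, ht, div_mul_cancel₀ _ hd0.ne']
  · have : x - (c + t • (x - c)) = (1 - t) • (x - c) := by
      rw [sub_smul, one_smul]; abel
    rw [dist_eq_norm, this, norm_smul, Real.norm_eq_abs, abs_of_nonneg (by linarith), hnorm,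
      ht, sub_mul, one_mul, div_mul_cancel₀ _ hd0.ne']

lemma psi_sep {n : ℕ} (c : Fin n → ℝ) {l δ w : ℝ}
    (hl : 0 < l) (hδ : 0 < δ) (hδ1 : δ < 1) (hw1 : 2 * δ ≤ w) (hw2 : w ≤ 1 / 4)
    {x y : Fin n → ℝ} (hx1 : dist x c ≤ l / 2) (hx2 : (1 - δ) * l / 2 < dist x c)
    (hy1 : dist y c ≤ l / 2) (hy2 : (1 - δ) * l / 2 < dist y c)
    (hxy : w * l < dist x y) :
    w * l / 4 < dist (c + (((1 - 3 * w / 2) * (l / 2)) / dist x c) • (x - c))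
      (c + (((1 - 3 * w / 2) * (l / 2)) / dist y c) • (y - c)) := by
  set R := (1 - 3 * w / 2) * (l / 2) with hR
  have hw0 : 0 < w := by linarith
  have hs0 : 0 < w * l := by positivity
  set a := dist x c with ha
  set b := dist y c with hb
  have ha0 : 0 < a := lt_trans (by nlinarith : (0:ℝ) < (1 - δ) * l / 2) hx2
  have hb0 : 0 < b := lt_trans (by nlinarith : (0:ℝ) < (1 - δ) * l / 2) hy2
  have hR0 : 0 < R := by rw [hR]; nlinarith
  have hab : |b - a| ≤ w * l / 4 := by
    rw [abs_le]; constructor <;> nlinarith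
  have hnx : ‖x - c‖ = a := (dist_eq_norm x c).symm
  have hny : ‖y - c‖ = b := (dist_eq_norm y c).symm
  have hkey : dist (c + (R / a) • (x - c)) (c + (R / b) • (y - c)) =
      ‖(R / a) • (x - c) - (R / b) • (y - c)‖ := by
    rw [dist_eq_norm, add_sub_add_left_eq_sub]
  have tri : ‖(R / a) • (x - c) - (R / a) • (y - c)‖ -
      ‖(R / a) • (y - c) - (R / b) • (y - c)‖ ≤
      ‖(R / a) • (x - c) - (R / b) • (y - c)‖ := by
    have h := norm_sub_le ((R / a) • (x - c) - (R / b) • (y - c))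
      ((R / a) • (y - c) - (R / b) • (y - c))
    have heq : (R / a) • (x - c) - (R / b) • (y - c) -
        ((R / a) • (y - c) - (R / b) • (y - c)) = (R / a) • (x - c) - (R / a) • (y - c) := by
      abel
    rw [heq] at h
    linarith
  have h1 : ‖(R / a) • (x - c) - (R / a) • (y - c)‖ = (R / a) * dist x y := by
    rw [← smul_sub, norm_smul, Real.norm_eq_abs, abs_of_pos (by positivity)]
    congr 1
    rw [← dist_eq_norm]
    exact dist_sub_right x y c  -- dist (x - c) (y - c) = dist x y ?
  have h2 : ‖(R / a) • (y - c) - (R / b) • (y - c)‖ = R * |b - a| / a := by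
    rw [← sub_smul, norm_smul, Real.norm_eq_abs, hny]
    have hd : R / a - R / b = R * (b - a) / (a * b) := by field_simp
    rw [hd, abs_div, abs_mul, abs_of_pos hR0, abs_of_pos (by positivity : (0:ℝ) < a * b)]
    field_simp
  have hRa : 5 / 8 ≤ R / a := by
    have h58 : (5:ℝ) / 8 ≤ 1 - 3 * w / 2 := by linarith
    have : 1 - 3 * w / 2 ≤ R / a := by
      rw [hR, le_div_iff₀ ha0]
      nlinarith
    linarith
  have hfin : (R / a) * dist x y - R * |b - a| / a ≤
      dist (c + (R / a) • (x - c)) (c + (R / b) • (y - c)) := by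
    rw [hkey]
    calc (R / a) * dist x y - R * |b - a| / a
        = ‖(R / a) • (x - c) - (R / a) • (y - c)‖ -
          ‖(R / a) • (y - c) - (R / b) • (y - c)‖ := by rw [h1, h2]
      _ ≤ _ := tri
  have habs : (0:ℝ) ≤ |b - a| := abs_nonneg _
  have hRdiv : R * |b - a| / a = (R / a) * |b - a| := by ring
  rw [hRdiv] at hfin
  have hP0 : (0:ℝ) ≤ R / a := by positivity
  have P1 := mul_le_mul_of_nonneg_left hxy.le hP0
  have P2 := mul_le_mul_of_nonneg_left hab hP0
  have P3 := mul_le_mul_of_nonneg_right hRa hs0.le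
  linarith [hfin, P1, P2, P3]

lemma halo_le_annulus {n : ℕ} {σ : Measure (Fin n → ℝ)} {D : ℝ}
    (hD : ∀ (c : Fin n → ℝ) (r : ℝ), 0 < r →
      σ (closedBall c r) ≤ ENNReal.ofReal D * σ (closedBall c (r / 2)))
    (c : Fin n → ℝ) {l δ w : ℝ}
    (hl : 0 < l) (hδ : 0 < δ) (hδ1 : δ < 1) (hw1 : 2 * δ ≤ w) (hw2 : w ≤ 1 / 4) :
    σ (closedBall c (l / 2) \ closedBall c ((1 - δ) * l / 2)) ≤
      ENNReal.ofReal D ^ 4 *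
        σ (closedBall c ((1 - w) * l / 2) \ closedBall c ((1 - 2 * w) * l / 2)) := by
  have hw0 : 0 < w := by linarith
  set s := w * l with hs
  have hs0 : 0 < s := by positivity
  set H := closedBall c (l / 2) \ closedBall c ((1 - δ) * l / 2) with hH
  set ψ : (Fin n → ℝ) → (Fin n → ℝ) :=
    fun x => c + (((1 - 3 * w / 2) * (l / 2)) / dist x c) • (x - c) with hψ
  set A := closedBall c ((1 - w) * l / 2) \ closedBall c ((1 - 2 * w) * l / 2) with hA
  -- membership bounds
  have hmem : ∀ x ∈ H, dist x c ≤ l / 2 ∧ (1 - δ) * l / 2 < dist x c := by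
    intro x hx
    refine ⟨mem_closedBall.mp hx.1, ?_⟩
    have := hx.2
    rw [mem_closedBall] at this
    exact lt_of_not_ge this
  -- psi distance facts
  have hψfacts : ∀ x ∈ H, dist (ψ x) c = (1 - 3 * w / 2) * (l / 2) ∧
      dist x (ψ x) = dist x c - (1 - 3 * w / 2) * (l / 2) := by
    intro x hx
    exact psi_estimates c hl hδ hδ1 hw1 hw2 (hmem x hx).1 (hmem x hx).2
  -- small ball inclusion
  have hsmall : ∀ x ∈ H, closedBall (ψ x) (s / 8) ⊆ A := by
    intro x hx z hz
    rw [mem_closedBall] at hz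
    have h1 := (hψfacts x hx).1
    have hup : dist z c ≤ (1 - w) * l / 2 := by
      have := dist_triangle z (ψ x) c
      rw [h1] at this
      nlinarith
    have hlo : (1 - 2 * w) * l / 2 < dist z c := by
      have := dist_triangle (ψ x) z c
      rw [h1, dist_comm (ψ x) z] at this
      nlinarith
    exact ⟨mem_closedBall.mpr hup, by rw [mem_closedBall]; exact not_le.mpr hlo⟩
  -- big ball inclusion
  have hbig : ∀ x ∈ H, closedBall x s ⊆ closedBall (ψ x) (2 * s) := by
    intro x hx z hz
    rw [mem_closedBall] at hz ⊢
    have h2 := (hψfacts x hx).2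
    have := dist_triangle z x (ψ x)
    have hd1 := (hmem x hx).1
    nlinarith
  -- maximal separated set
  have hchains : ∀ ch ⊆ {T | T ⊆ H ∧ T.Pairwise fun u v => s < dist u v},
      IsChain (· ⊆ ·) ch → ∃ ub ∈ {T | T ⊆ H ∧ T.Pairwise fun u v => s < dist u v},
        ∀ t ∈ ch, t ⊆ ub := by
    intro ch hch hchain
    refine ⟨⋃₀ ch, ⟨?_, ?_⟩, fun t ht => Set.subset_sUnion_of_mem ht⟩
    · exact Set.sUnion_subset fun t ht => (hch ht).1
    · intro u hu v hv huv
      obtain ⟨tu, htu, hu'⟩ := hu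
      obtain ⟨tv, htv, hv'⟩ := hv
      rcases hchain.total htu htv with h | h
      · exact (hch htv).2 (h hu') hv' huv
      · exact (hch htu).2 hu' (h hv') huv
  obtain ⟨T, hTmax⟩ := zorn_subset _ hchains
  obtain ⟨hTH, hTsep⟩ := hTmax.prop
  -- covering
  have hcover : H ⊆ ⋃ x ∈ T, closedBall x s := by
    intro y hy
    by_contra hnot
    rw [Set.mem_iUnion₂] at hnot
    push_neg at hnot
    have hsep : ∀ x ∈ T, s < dist y x := by
      intro x hx
      have := hnot x hx
      rw [mem_closedBall] at this
      exact lt_of_not_ge this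
    have hyT : y ∉ T := by
      intro hyT
      have := hsep y hyT
      simp at this
      linarith
    have hins : insert y T ∈ {T | T ⊆ H ∧ T.Pairwise fun u v => s < dist u v} := by
      constructor
      · exact Set.insert_subset hy hTH
      · haveI : Std.Symm (fun u v : Fin n → ℝ => s < dist u v) := ⟨fun u v h => by rwa [dist_comm]⟩
        rw [Set.pairwise_insert_of_symm]
        · exact ⟨hTsep, fun x hx _ => hsep x hx⟩
    have := hTmax.2 hins (Set.subset_insert y T)
    exact hyT (this (Set.mem_insert y T))
  -- finiteness
  have hTfin : T.Finite := by
    obtain ⟨t, htfin, htsub⟩ := (totallyBounded_iff.mp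
      (isCompact_closedBall c (l / 2)).totallyBounded) (s / 2) (by positivity)
    have hsing : ∀ y ∈ t, (T ∩ ball y (s / 2)).Subsingleton := by
      intro y _ u hu v hv
      by_contra huv
      have hd := hTsep hu.1 hv.1 huv
      have h1 := mem_ball.mp hu.2
      have h2 := mem_ball.mp hv.2
      have := dist_triangle u y v
      rw [dist_comm y v] at this
      linarith
    have hsub : T ⊆ ⋃ y ∈ t, (T ∩ ball y (s / 2)) := by
      intro x hx
      have hxH := hTH hx
      have := htsub hxH.1
      rw [Set.mem_iUnion₂] at this ⊢
      obtain ⟨y, hy, hxy⟩ := this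
      exact ⟨y, hy, hx, hxy⟩
    exact Set.Finite.subset (Set.Finite.biUnion htfin
      (fun y hy => Set.Subsingleton.finite (hsing y hy))) hsub
  -- measure chain
  set F := hTfin.toFinset with hF
  have hFH : ∀ x ∈ F, x ∈ H := by
    intro x hx
    exact hTH (hTfin.mem_toFinset.mp hx)
  have hdisj : (↑F : Set (Fin n → ℝ)).PairwiseDisjoint
      (fun x => closedBall (ψ x) (s / 8)) := by
    intro u hu v hv huv
    have huT := hTfin.mem_toFinset.mp (Finset.mem_coe.mp hu)
    have hvT := hTfin.mem_toFinset.mp (Finset.mem_coe.mp hv)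
    have hd := hTsep huT hvT huv
    have hsep4 := psi_sep c hl hδ hδ1 hw1 hw2 (hmem u (hTH huT)).1 (hmem u (hTH huT)).2
      (hmem v (hTH hvT)).1 (hmem v (hTH hvT)).2 hd
    exact closedBall_disjoint_closedBall (by rw [hψ]; dsimp only; linarith)
  calc σ H ≤ σ (⋃ x ∈ F, closedBall x s) := by
        refine measure_mono (hcover.trans ?_)
        intro z hz
        rw [Set.mem_iUnion₂] at hz ⊢
        obtain ⟨x, hx, hzx⟩ := hz
        exact ⟨x, hTfin.mem_toFinset.mpr hx, hzx⟩
    _ ≤ ∑ x ∈ F, σ (closedBall x s) := measure_biUnion_finset_le F _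
    _ ≤ ∑ x ∈ F, ENNReal.ofReal D ^ 4 * σ (closedBall (ψ x) (s / 8)) := by
        refine Finset.sum_le_sum fun x hx => ?_
        calc σ (closedBall x s) ≤ σ (closedBall (ψ x) (2 * s)) :=
              measure_mono (hbig x (hFH x hx))
          _ ≤ ENNReal.ofReal D ^ 4 * σ (closedBall (ψ x) (s / 8)) := doubling_four hD _ hs0
    _ = ENNReal.ofReal D ^ 4 * ∑ x ∈ F, σ (closedBall (ψ x) (s / 8)) := by
        rw [Finset.mul_sum]
    _ = ENNReal.ofReal D ^ 4 * σ (⋃ x ∈ F, closedBall (ψ x) (s / 8)) := by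
        rw [measure_biUnion_finset hdisj (fun x _ => measurableSet_closedBall)]
    _ ≤ ENNReal.ofReal D ^ 4 * σ A := by
        refine mul_le_mul_right (measure_mono ?_) _
        refine Set.iUnion₂_subset fun x hx => hsmall x (hFH x hx)

lemma cube_eq_closedBall (n : ℕ) (c : Fin n → ℝ) (l : ℝ) (hl : 0 ≤ l) :
    Cube n c l = Metric.closedBall c (l / 2) := by
  ext x
  simp only [Cube, Set.mem_setOf_eq, Metric.mem_closedBall]
  rw [dist_pi_le_iff (by linarith)]
  simp [Real.dist_eq]

/-- The halo estimate for doubling measures: for every cube `Q` and `0 < δ < 1`,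
`|Q ∖ (1-δ)Q|_σ ≤ (C / ln(1/δ)) |Q|_σ`. -/
theorem doubling_halo_estimate (n : ℕ) (hn : 0 < n) (Cd : ℝ) :
    ∃ C : ℝ, 0 < C ∧
      ∀ (σ : Measure (Fin n → ℝ)), IsLocallyFiniteMeasure σ → IsDoubling σ Cd →
        ∀ (c : Fin n → ℝ) (l δ : ℝ), 0 < l → 0 < δ → δ < 1 →
          σ (Cube n c l \ Cube n c ((1 - δ) * l)) ≤
            ENNReal.ofReal (C / Real.log (1 / δ)) * σ (Cube n c l) := by
  set D := max Cd 1 with hDdef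
  have hD1 : (1:ℝ) ≤ D := le_max_right _ _
  refine ⟨100 * D ^ 4, by positivity, ?_⟩
  intro σ _ hσd c l δ hl hδ hδ1
  have hD : ∀ (p : Fin n → ℝ) (r : ℝ), 0 < r →
      σ (closedBall p r) ≤ ENNReal.ofReal D * σ (closedBall p (r / 2)) := by
    intro p r hr
    have h := hσd p r hr
    rw [cube_eq_closedBall n p (2 * r) (by linarith), cube_eq_closedBall n p r hr.le,
      show 2 * r / 2 = r by ring] at h
    exact h.trans (mul_le_mul_left (ofReal_le_ofReal (le_max_left _ _)) _)
  have hL0 : 0 < Real.log (1 / δ) := Real.log_pos (by rw [lt_div_iff₀ hδ]; linarith)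
  rw [cube_eq_closedBall n c l hl.le, cube_eq_closedBall n c ((1 - δ) * l) (by nlinarith)]
  by_cases hcase : δ < 1 / 16
  · -- main case
    set e := 1 / δ with he
    have he0 : 0 < e := by positivity
    have he16 : 16 < e := by rw [he, lt_div_iff₀ hδ]; linarith
    set M := ⌊e⌋₊ with hM
    have hM16 : 16 ≤ M := Nat.le_floor (by push_cast; linarith)
    set k := Nat.log 2 M with hk
    have hk1 : (2:ℝ) ^ k ≤ e := by
      have h1 : (2:ℕ) ^ k ≤ M := Nat.pow_log_le_self 2 (by omega)
      have h2 : ((2 ^ k : ℕ) : ℝ) ≤ (M : ℝ) := by exact_mod_cast h1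
      have h3 : (M : ℝ) ≤ e := Nat.floor_le he0.le
      push_cast at h2
      linarith
    have hMk : M < 2 ^ (k + 1) := Nat.lt_pow_succ_log_self (by norm_num) M
    have hk2 : e < (2:ℝ) ^ (k + 1) := by
      have h1 := Nat.lt_floor_add_one e
      have h2 : ((M:ℝ) + 1) ≤ ((2 ^ (k+1) : ℕ) : ℝ) := by exact_mod_cast hMk
      push_cast at h2 ⊢
      linarith
    have hk4 : 4 ≤ k := by
      have : (2:ℕ) ^ 4 < 2 ^ (k + 1) := lt_of_le_of_lt (by omega) hMk
      have := (Nat.pow_lt_pow_iff_right (by norm_num : 1 < 2)).mp this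
      omega
    set m := k - 2 with hm
    have hm2 : 2 ≤ m := by omega
    have hkm : k = m + 2 := by omega
    have h2kδ : (2:ℝ) ^ k * δ ≤ 1 := by
      have := (le_div_iff₀ hδ).mp (by rw [← he]; exact hk1 : (2:ℝ) ^ k ≤ 1 / δ)
      linarith
    set B : ℕ → Set (Fin n → ℝ) := fun j =>
      closedBall c ((1 - 2 ^ j * δ) * l / 2) \ closedBall c ((1 - 2 ^ (j + 1) * δ) * l / 2)
      with hB
    have hBsub : ∀ j, B j ⊆ closedBall c (l / 2) := by
      intro j
      refine Set.diff_subset.trans (closedBall_subset_closedBall ?_)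
      have : (0:ℝ) ≤ 2 ^ j * δ := by positivity
      nlinarith
    have hBdisj : (↑(Finset.Icc 1 m) : Set ℕ).PairwiseDisjoint B := by
      have key : ∀ i j : ℕ, i < j → Disjoint (B i) (B j) := by
        intro i j hij
        have hsub : B j ⊆ closedBall c ((1 - 2 ^ (i + 1) * δ) * l / 2) := by
          refine Set.diff_subset.trans (closedBall_subset_closedBall ?_)
          have h2 : (2:ℝ) ^ (i + 1) ≤ 2 ^ j := by
            exact pow_le_pow_right₀ (by norm_num) hij
          nlinarith [mul_le_mul_of_nonneg_right (mul_le_mul_of_nonneg_right h2 hδ.le) hl.le]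
        exact (Set.disjoint_sdiff_left).mono_right hsub
      intro i _ j _ hij
      rcases lt_or_gt_of_ne hij with h | h
      · exact key i j h
      · exact (key j i h).symm
    have hann : ∀ j ∈ Finset.Icc 1 m, σ (closedBall c (l / 2) \ closedBall c ((1 - δ) * l / 2)) ≤
        ENNReal.ofReal D ^ 4 * σ (B j) := by
      intro j hj
      rw [Finset.mem_Icc] at hj
      have hj1 : 1 ≤ j := hj.1
      have hjm : j ≤ m := hj.2
      have hw1 : 2 * δ ≤ 2 ^ j * δ := by
        have : (2:ℝ) ^ 1 ≤ 2 ^ j := pow_le_pow_right₀ (by norm_num) hj1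
        nlinarith
      have hw2 : 2 ^ j * δ ≤ 1 / 4 := by
        have h1 : (2:ℝ) ^ j ≤ 2 ^ m := pow_le_pow_right₀ (by norm_num) hjm
        have h2 : (2:ℝ) ^ k = 2 ^ m * 4 := by rw [hkm, pow_add]; norm_num
        nlinarith
      have := halo_le_annulus hD c hl hδ hδ1 hw1 hw2
      rw [show 2 * (2 ^ j * δ) = 2 ^ (j + 1) * δ by ring] at this
      exact this
    have hsum : ∑ j ∈ Finset.Icc 1 m, σ (B j) ≤ σ (closedBall c (l / 2)) := by
      rw [← measure_biUnion_finset hBdisj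
        (fun j _ => (measurableSet_closedBall).diff measurableSet_closedBall)]
      exact measure_mono (Set.iUnion₂_subset fun j _ => hBsub j)
    have hcard : (Finset.Icc 1 m).card = m := by rw [Nat.card_Icc]; omega
    have hmain : (m : ℝ≥0∞) * σ (closedBall c (l / 2) \ closedBall c ((1 - δ) * l / 2)) ≤
        ENNReal.ofReal D ^ 4 * σ (closedBall c (l / 2)) := by
      calc (m : ℝ≥0∞) * σ (closedBall c (l / 2) \ closedBall c ((1 - δ) * l / 2))
          = ∑ _j ∈ Finset.Icc 1 m, σ (closedBall c (l / 2) \ closedBall c ((1 - δ) * l / 2)) := by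
            rw [Finset.sum_const, hcard, nsmul_eq_mul]
        _ ≤ ∑ j ∈ Finset.Icc 1 m, ENNReal.ofReal D ^ 4 * σ (B j) := Finset.sum_le_sum hann
        _ = ENNReal.ofReal D ^ 4 * ∑ j ∈ Finset.Icc 1 m, σ (B j) := (Finset.mul_sum _ _ _).symm
        _ ≤ _ := mul_le_mul_right hsum _
    have hL : Real.log (1 / δ) ≤ (k : ℝ) + 1 := by
      have h1 : Real.log (1 / δ) < Real.log ((2:ℝ) ^ (k + 1)) := Real.log_lt_log (by positivity) hk2
      rw [Real.log_pow] at h1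
      have h2 : Real.log 2 ≤ 1 := by
        have := Real.log_le_sub_one_of_pos (by norm_num : (0:ℝ) < 2)
        linarith
      have h3 : (0:ℝ) ≤ (k:ℝ) + 1 := by positivity
      have h4 : ((k+1 : ℕ) : ℝ) * Real.log 2 ≤ ((k+1 : ℕ) : ℝ) * 1 := by
        refine mul_le_mul_of_nonneg_left h2 (by positivity)
      push_cast at h1 h4
      linarith
    have harith : D ^ 4 ≤ (m : ℝ) * (100 * D ^ 4 / Real.log (1 / δ)) := by
      rw [mul_div_assoc', le_div_iff₀ hL0]
      have hmk : (k : ℝ) + 1 ≤ 5 * (m : ℝ) := by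
        have : (k:ℝ) = (m:ℝ) + 2 := by exact_mod_cast hkm
        have hm2' : (2:ℝ) ≤ (m:ℝ) := by exact_mod_cast hm2
        linarith
      have hD40 : (1:ℝ) ≤ D ^ 4 := one_le_pow₀ hD1
      nlinarith [hL0.le]
    have hfinal : ENNReal.ofReal D ^ 4 * σ (closedBall c (l / 2)) ≤
        (m : ℝ≥0∞) * (ENNReal.ofReal (100 * D ^ 4 / Real.log (1 / δ)) * σ (closedBall c (l / 2))) := by
      rw [← mul_assoc]
      refine mul_le_mul_left ?_ _
      rw [← ENNReal.ofReal_pow (by linarith)]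
      calc ENNReal.ofReal (D ^ 4)
          ≤ ENNReal.ofReal ((m : ℝ) * (100 * D ^ 4 / Real.log (1 / δ))) :=
            ofReal_le_ofReal harith
        _ = (m : ℝ≥0∞) * ENNReal.ofReal (100 * D ^ 4 / Real.log (1 / δ)) := by
            rw [ENNReal.ofReal_mul (by positivity), ENNReal.ofReal_natCast]
    have hm0 : (m : ℝ≥0∞) ≠ 0 := by
      simp only [ne_eq, Nat.cast_eq_zero]
      omega
    exact (ENNReal.mul_le_mul_iff_right hm0 (natCast_ne_top m)).mp (hmain.trans hfinal)
  · -- trivial case: δ ≥ 1/16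
    push_neg at hcase
    have h16 : 1 / δ ≤ 16 := by rw [div_le_iff₀ hδ]; linarith
    have hlog : Real.log (1 / δ) ≤ 100 * D ^ 4 := by
      have h1 := Real.log_le_sub_one_of_pos (show (0:ℝ) < 1/δ by positivity)
      have hD40 : (1:ℝ) ≤ D ^ 4 := one_le_pow₀ hD1
      nlinarith
    have hone : (1 : ℝ≥0∞) ≤ ENNReal.ofReal (100 * D ^ 4 / Real.log (1 / δ)) :=
      one_le_ofReal.mpr ((one_le_div hL0).mpr hlog)
    calc σ (closedBall c (l / 2) \ closedBall c ((1 - δ) * l / 2))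
        ≤ σ (closedBall c (l / 2)) := measure_mono Set.diff_subset
      _ = 1 * σ (closedBall c (l / 2)) := (one_mul _).symm
      _ ≤ _ := mul_le_mul_left hone _
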